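/- Let X : Δ^op → C be a simplicial object in a category C with pullbacks whose Segal maps X_k → X_1 ×_{X_0} ⋯ ×_{X_0} X_1 (k factors) are isomorphisms for all k ≥ 2. Then X is isomorphic to the nerve of an internal category in C. Conversely, the nerve of an internal category has invertible Segal maps. -/

import Mathlib

/-!
STATEMENT 4: A simplicial object whose Segal maps are isomorphisms is isomorphic to the
nerve of an internal category, and conversely.  We formalize this for the base category
`Set` (internal categories in `Set` are precisely small categories, and the Segal maps of
a simplicial set `X` are isomorphisms iff the spine maps `X _⦋n⦌ → Path X n` are
bijections, i.e. iff `X` is strict Segal): a simplicial set satisfies the strict Segal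
condition if and only if it is isomorphic to the nerve of a small category.
-/

open CategoryTheory SSet SimplexCategory Simplicial SimplicialObject
universe u
namespace Stmt4

lemma hom_ext₀ {n : ℕ} {f g : (⦋0⦌ : SimplexCategory) ⟶ ⦋n⦌}
    (h : f.toOrderHom 0 = g.toOrderHom 0) : f = g := by
  apply SimplexCategory.Hom.ext; ext i; fin_cases i
  exact congrArg Fin.val h

lemma hom_ext₁ {n : ℕ} {f g : (⦋1⦌ : SimplexCategory) ⟶ ⦋n⦌}
    (h0 : f.toOrderHom 0 = g.toOrderHom 0) (h1 : f.toOrderHom 1 = g.toOrderHom 1) : f = g := by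
  apply SimplexCategory.Hom.ext; ext i; fin_cases i
  · exact congrArg Fin.val h0
  · exact congrArg Fin.val h1

variable {X : SSet.{u}}

lemma map_comp_apply {a b c : SimplexCategory} (f : a ⟶ b) (g : b ⟶ c)
    (x : X.obj (Opposite.op c)) :
    X.map (f ≫ g).op x = X.map f.op (X.map g.op x) := by
  rw [op_comp, FunctorToTypes.map_comp_apply]

def path₂ (e e' : X _⦋1⦌) (w : X.δ 0 e = X.δ 1 e') : Path X 2 where
  vertex := ![X.δ 1 e, X.δ 0 e, X.δ 0 e']
  arrow := ![e, e']
  arrow_src i := by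
    fin_cases i
    · rfl
    · exact w.symm
  arrow_tgt i := by fin_cases i <;> rfl

def path₃ (e₁ e₂ e₃ : X _⦋1⦌) (w₁ : X.δ 0 e₁ = X.δ 1 e₂) (w₂ : X.δ 0 e₂ = X.δ 1 e₃) :
    Path X 3 where
  vertex := ![X.δ 1 e₁, X.δ 1 e₂, X.δ 1 e₃, X.δ 0 e₃]
  arrow := ![e₁, e₂, e₃]
  arrow_src i := by
    fin_cases i
    · rfl
    · rfl
    · rfl
  arrow_tgt i := by
    fin_cases i
    · exact w₁
    · exact w₂
    · rfl

/-- Instance wrapper around the (now structure-valued) strict Segal data. -/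
class SSeg (X : SSet.{u}) : Type u where
  sx : StrictSegal X

variable [SSeg X]

noncomputable def spineToSimplex {n : ℕ} (p : Path X n) : X _⦋n⦌ :=
  (SSeg.sx (X := X)).spineToSimplex p

noncomputable def spineToDiagonal {n : ℕ} (p : Path X n) : X _⦋1⦌ :=
  SimplicialObject.diagonal X (spineToSimplex p)

lemma spineToSimplex_vertex {n : ℕ} (i : Fin (n + 1)) (f : Path X n) :
    X.map (SimplexCategory.const ⦋0⦌ ⦋n⦌ i).op (spineToSimplex f) = f.vertex i :=
  (SSeg.sx (X := X)).spineToSimplex_vertex i f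

lemma spineToSimplex_arrow {n : ℕ} (i : Fin n) (f : Path X n) :
    X.map (mkOfSucc i).op (spineToSimplex f) = f.arrow i :=
  (SSeg.sx (X := X)).spineToSimplex_arrow i f

lemma spineToSimplex_spine {n : ℕ} (x : X _⦋n⦌) : spineToSimplex (X.spine n x) = x :=
  (SSeg.sx (X := X)).spineToSimplex_spine_apply x

lemma spineInjective {n : ℕ} : Function.Injective (X.spine n) :=
  (SSeg.sx (X := X)).spineInjective

lemma spine_δ_arrow_lt {n : ℕ} (f : Path X (n + 1)) {i : Fin n} {j : Fin (n + 2)}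
    (h : i.succ.castSucc < j) :
    (X.spine n (X.δ j (spineToSimplex f))).arrow i = f.arrow i.castSucc :=
  (SSeg.sx (X := X)).spine_δ_arrow_lt f h

lemma spine_δ_arrow_gt {n : ℕ} (f : Path X (n + 1)) {i : Fin n} {j : Fin (n + 2)}
    (h : j < i.succ.castSucc) :
    (X.spine n (X.δ j (spineToSimplex f))).arrow i = f.arrow i.succ :=
  (SSeg.sx (X := X)).spine_δ_arrow_gt f h

lemma spine_δ_arrow_eq {n : ℕ} (f : Path X (n + 1)) {i : Fin n} {j : Fin (n + 2)}
    (h : j = i.succ.castSucc) :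
    (X.spine n (X.δ j (spineToSimplex f))).arrow i =
      spineToDiagonal (f.interval i 2 (by omega)) :=
  (SSeg.sx (X := X)).spine_δ_arrow_eq f h

noncomputable def comp₂ (e e' : X _⦋1⦌) (w : X.δ 0 e = X.δ 1 e') : X _⦋1⦌ :=
  spineToDiagonal (path₂ e e' w)

lemma δ_comp_map {n : ℕ} (k : Fin 2) (f : (⦋1⦌ : SimplexCategory) ⟶ ⦋n⦌) (x : X _⦋n⦌) :
    X.δ k (X.map f.op x) = X.map (SimplexCategory.δ k ≫ f).op x := by
  dsimp [SimplicialObject.δ]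
  rw [← FunctorToTypes.map_comp_apply, ← op_comp]

lemma δ_one_comp₂ (e e' : X _⦋1⦌) (w : X.δ 0 e = X.δ 1 e') :
    X.δ 1 (comp₂ e e' w) = X.δ 1 e := by
  dsimp [comp₂, spineToDiagonal, SimplicialObject.diagonal]
  rw [δ_comp_map, hom_ext₀ (f := SimplexCategory.δ 1 ≫ diag 2) (g := SimplexCategory.const ⦋0⦌ ⦋2⦌ 0) rfl, spineToSimplex_vertex]
  rfl

lemma δ_zero_comp₂ (e e' : X _⦋1⦌) (w : X.δ 0 e = X.δ 1 e') :
    X.δ 0 (comp₂ e e' w) = X.δ 0 e' := by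
  dsimp [comp₂, spineToDiagonal, SimplicialObject.diagonal]
  rw [δ_comp_map, hom_ext₀ (f := SimplexCategory.δ 0 ≫ diag 2) (g := SimplexCategory.const ⦋0⦌ ⦋2⦌ 2) rfl, spineToSimplex_vertex]
  rfl

lemma δ_σ (k : Fin 2) (a : X _⦋0⦌) : X.δ k (X.σ 0 a) = a := by
  dsimp [SimplicialObject.δ, SimplicialObject.σ]
  rw [← FunctorToTypes.map_comp_apply, ← op_comp,
    hom_ext₀ (f := SimplexCategory.δ k ≫ SimplexCategory.σ 0) (g := 𝟙 (⦋0⦌ : SimplexCategory)) (@Subsingleton.elim (Fin 1) _ _ _), op_id, FunctorToTypes.map_id_apply]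

lemma comp₂_id_left (e : X _⦋1⦌) (w : X.δ 0 (X.σ 0 (X.δ 1 e)) = X.δ 1 e) :
    comp₂ (X.σ 0 (X.δ 1 e)) e w = e := by
  have hp : path₂ (X.σ 0 (X.δ 1 e)) e w = X.spine 2 (X.σ 0 e) := by
    apply Path.ext'
    intro i
    fin_cases i
    · show X.σ 0 (X.δ 1 e) = X.map (mkOfSucc 0).op (X.σ 0 e)
      show _ = X.map (mkOfSucc 0).op (X.map (SimplexCategory.σ 0).op e)
      rw [← map_comp_apply,
        hom_ext₁ (f := mkOfSucc 0 ≫ SimplexCategory.σ 0)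
          (g := SimplexCategory.σ 0 ≫ SimplexCategory.δ 1) rfl rfl,
        map_comp_apply]
      rfl
    · show e = X.map (mkOfSucc 1).op (X.map (SimplexCategory.σ 0).op e)
      rw [← map_comp_apply, hom_ext₁ (f := mkOfSucc 1 ≫ SimplexCategory.σ 0) (g := 𝟙 (⦋1⦌ : SimplexCategory)) rfl rfl,
        op_id, FunctorToTypes.map_id_apply]
  show spineToDiagonal _ = e
  rw [hp]
  dsimp [spineToDiagonal, SimplicialObject.diagonal]
  rw [spineToSimplex_spine]
  show X.map (diag 2).op (X.map (SimplexCategory.σ 0).op e) = e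
  rw [← map_comp_apply, hom_ext₁ (f := diag 2 ≫ SimplexCategory.σ 0) (g := 𝟙 (⦋1⦌ : SimplexCategory)) rfl rfl,
    op_id, FunctorToTypes.map_id_apply]

lemma comp₂_id_right (e : X _⦋1⦌) (w : X.δ 0 e = X.δ 1 (X.σ 0 (X.δ 0 e))) :
    comp₂ e (X.σ 0 (X.δ 0 e)) w = e := by
  have hp : path₂ e (X.σ 0 (X.δ 0 e)) w = X.spine 2 (X.σ 1 e) := by
    apply Path.ext'
    intro i
    fin_cases i
    · show e = X.map (mkOfSucc 0).op (X.map (SimplexCategory.σ 1).op e)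
      rw [← map_comp_apply, hom_ext₁ (f := mkOfSucc 0 ≫ SimplexCategory.σ 1) (g := 𝟙 (⦋1⦌ : SimplexCategory)) rfl rfl,
        op_id, FunctorToTypes.map_id_apply]
    · show X.σ 0 (X.δ 0 e) = X.map (mkOfSucc 1).op (X.map (SimplexCategory.σ 1).op e)
      rw [← map_comp_apply,
        hom_ext₁ (f := mkOfSucc 1 ≫ SimplexCategory.σ 1)
          (g := SimplexCategory.σ 0 ≫ SimplexCategory.δ 0) rfl rfl,
        map_comp_apply]
      rfl
  show spineToDiagonal _ = e
  rw [hp]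
  dsimp [spineToDiagonal, SimplicialObject.diagonal]
  rw [spineToSimplex_spine]
  show X.map (diag 2).op (X.map (SimplexCategory.σ 1).op e) = e
  rw [← map_comp_apply, hom_ext₁ (f := diag 2 ≫ SimplexCategory.σ 1) (g := 𝟙 (⦋1⦌ : SimplexCategory)) rfl rfl,
    op_id, FunctorToTypes.map_id_apply]


section
variable (e₁ e₂ e₃ : X _⦋1⦌) (w₁ : X.δ 0 e₁ = X.δ 1 e₂) (w₂ : X.δ 0 e₂ = X.δ 1 e₃)

lemma interval₀₂ : (path₃ e₁ e₂ e₃ w₁ w₂).interval 0 2 (by omega) = path₂ e₁ e₂ w₁ := by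
  apply Path.ext'
  intro i
  fin_cases i <;> rfl

lemma interval₁₂ : (path₃ e₁ e₂ e₃ w₁ w₂).interval 1 2 (by omega) = path₂ e₂ e₃ w₂ := by
  apply Path.ext'
  intro i
  fin_cases i <;> rfl

lemma comp₂_assoc :
    comp₂ (comp₂ e₁ e₂ w₁) e₃ ((δ_zero_comp₂ e₁ e₂ w₁).trans w₂) =
      comp₂ e₁ (comp₂ e₂ e₃ w₂) (w₁.trans (δ_one_comp₂ e₂ e₃ w₂).symm) := by
  have h₁ : path₂ (comp₂ e₁ e₂ w₁) e₃ ((δ_zero_comp₂ e₁ e₂ w₁).trans w₂) =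
      X.spine 2 (X.δ 1 (spineToSimplex (path₃ e₁ e₂ e₃ w₁ w₂))) := by
    apply Path.ext'
    intro i
    fin_cases i
    · show comp₂ e₁ e₂ w₁ = (X.spine 2 (X.δ 1 (spineToSimplex (path₃ e₁ e₂ e₃ w₁ w₂)))).arrow 0
      rw [spine_δ_arrow_eq (path₃ e₁ e₂ e₃ w₁ w₂) (i := 0) (j := 1) rfl]
      exact congrArg spineToDiagonal (interval₀₂ e₁ e₂ e₃ w₁ w₂).symm
    · show e₃ = (X.spine 2 (X.δ 1 (spineToSimplex (path₃ e₁ e₂ e₃ w₁ w₂)))).arrow 1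
      rw [spine_δ_arrow_gt (path₃ e₁ e₂ e₃ w₁ w₂) (i := 1) (j := 1) (by decide)]
      rfl
  have h₂ : path₂ e₁ (comp₂ e₂ e₃ w₂) (w₁.trans (δ_one_comp₂ e₂ e₃ w₂).symm) =
      X.spine 2 (X.δ 2 (spineToSimplex (path₃ e₁ e₂ e₃ w₁ w₂))) := by
    apply Path.ext'
    intro i
    fin_cases i
    · show e₁ = (X.spine 2 (X.δ 2 (spineToSimplex (path₃ e₁ e₂ e₃ w₁ w₂)))).arrow 0
      rw [spine_δ_arrow_lt (path₃ e₁ e₂ e₃ w₁ w₂) (i := 0) (j := 2) (by decide)]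
      rfl
    · show comp₂ e₂ e₃ w₂ = (X.spine 2 (X.δ 2 (spineToSimplex (path₃ e₁ e₂ e₃ w₁ w₂)))).arrow 1
      rw [spine_δ_arrow_eq (path₃ e₁ e₂ e₃ w₁ w₂) (i := 1) (j := 2) rfl]
      exact congrArg spineToDiagonal (interval₁₂ e₁ e₂ e₃ w₁ w₂).symm
  show spineToDiagonal _ = spineToDiagonal _
  rw [h₁, h₂]
  dsimp only [spineToDiagonal]
  rw [spineToSimplex_spine, spineToSimplex_spine]
  show X.map (diag 2).op (X.map (SimplexCategory.δ 1).op _) =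
    X.map (diag 2).op (X.map (SimplexCategory.δ 2).op _)
  rw [← map_comp_apply, ← map_comp_apply,
    hom_ext₁ (f := diag 2 ≫ SimplexCategory.δ 1) (g := diag 3) (by decide) (by decide),
    hom_ext₁ (f := diag 2 ≫ SimplexCategory.δ 2) (g := diag 3) (by decide) (by decide)]

end
def HoCat (X : SSet.{u}) [SSeg X] : Type u := X _⦋0⦌

abbrev EdgeTy (a b : X.obj (Opposite.op (SimplexCategory.mk 0))) : Type u :=
  {e : X.obj (Opposite.op (SimplexCategory.mk 1)) // X.δ 1 e = a ∧ X.δ 0 e = b}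

noncomputable instance : SmallCategory (HoCat X) where
  Hom a b := EdgeTy a b
  id a := ⟨X.σ 0 a, δ_σ 1 a, δ_σ 0 a⟩
  comp f g := ⟨comp₂ f.1 g.1 (f.2.2.trans g.2.1.symm),
    (δ_one_comp₂ _ _ _).trans f.2.1, (δ_zero_comp₂ _ _ _).trans g.2.2⟩
  id_comp f := by
    obtain ⟨e, h1, h2⟩ := f
    subst h1; subst h2
    exact Subtype.ext (comp₂_id_left e _)
  comp_id f := by
    obtain ⟨e, h1, h2⟩ := f
    subst h1; subst h2
    exact Subtype.ext (comp₂_id_right e _)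
  assoc f g h := Subtype.ext
    (comp₂_assoc f.1 g.1 h.1 (f.2.2.trans g.2.1.symm) (g.2.2.trans h.2.1.symm))

def eOf {a b : HoCat X} (f : a ⟶ b) : X _⦋1⦌ := Subtype.val f

def mkE {a b : HoCat X} (e : X _⦋1⦌) (h1 : X.δ 1 e = a) (h2 : X.δ 0 e = b) : a ⟶ b :=
  Subtype.mk e ⟨h1, h2⟩

lemma eOf_src {a b : HoCat X} (f : a ⟶ b) : X.δ 1 (eOf f) = a := (Subtype.prop f).1
lemma eOf_tgt {a b : HoCat X} (f : a ⟶ b) : X.δ 0 (eOf f) = b := (Subtype.prop f).2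

lemma eOf_inj {a b : HoCat X} {f g : a ⟶ b} (h : eOf f = eOf g) : f = g := Subtype.ext h

lemma eOf_comp {a b c : HoCat X} (f : a ⟶ b) (g : b ⟶ c) :
    eOf (f ≫ g) = comp₂ (eOf f) (eOf g) ((eOf_tgt f).trans (eOf_src g).symm) := rfl

lemma eOf_id (a : HoCat X) : eOf (𝟙 a) = X.σ 0 a := rfl

lemma eqToHom_val {a b : HoCat X} (h : a = b) :
    eOf (eqToHom h) = X.σ 0 a := by subst h; rfl

lemma eqToHom_comp_val {a a' b b' : HoCat X} (h : a' = a) (h' : b = b') (f : a ⟶ b) :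
    eOf (eqToHom h ≫ f ≫ eqToHom h') = eOf f := by
  subst h; subst h'
  rw [eqToHom_refl, eqToHom_refl, Category.comp_id, Category.id_comp]

/-- The tautological composable arrows associated to a simplex. -/
noncomputable def toCA (n : ℕ) (x : X _⦋n⦌) : ComposableArrows (HoCat X) n where
  obj i := X.map (SimplexCategory.const ⦋0⦌ ⦋n⦌ i).op x
  map {i j} f := ⟨X.map (mkOfLe i j (leOfHom f)).op x,
    by rw [δ_comp_map, hom_ext₀ (f := SimplexCategory.δ 1 ≫ mkOfLe i j (leOfHom f))
        (g := SimplexCategory.const ⦋0⦌ ⦋n⦌ i) rfl],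
    by rw [δ_comp_map, hom_ext₀ (f := SimplexCategory.δ 0 ≫ mkOfLe i j (leOfHom f))
        (g := SimplexCategory.const ⦋0⦌ ⦋n⦌ j) rfl]⟩
  map_id i := by
    apply Subtype.ext
    show X.map (mkOfLe i i _).op x = X.σ 0 (X.map (SimplexCategory.const ⦋0⦌ ⦋n⦌ i).op x)
    show _ = X.map (SimplexCategory.σ 0).op (X.map (SimplexCategory.const ⦋0⦌ ⦋n⦌ i).op x)
    rw [← map_comp_apply]
    exact ConcreteCategory.congr_hom (congrArg (fun f => X.map (Quiver.Hom.op f))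
      (hom_ext₁ (f := mkOfLe i i le_rfl)
        (g := SimplexCategory.σ 0 ≫ SimplexCategory.const ⦋0⦌ ⦋n⦌ i) rfl rfl)) x
  map_comp {i j k} f g := by
    apply Subtype.ext
    show X.map (mkOfLe i k _).op x = comp₂ (X.map (mkOfLe i j _).op x) (X.map (mkOfLe j k _).op x) _
    have hsp : path₂ (X.map (mkOfLe i j (leOfHom f)).op x) (X.map (mkOfLe j k (leOfHom g)).op x)
        (by rw [δ_comp_map, δ_comp_map,
          hom_ext₀ (f := SimplexCategory.δ 0 ≫ mkOfLe i j (leOfHom f))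
            (g := SimplexCategory.δ 1 ≫ mkOfLe j k (leOfHom g)) rfl]) =
        X.spine 2 (X.map (mkOfLeComp i j k (leOfHom f) (leOfHom g)).op x) := by
      apply Path.ext'
      intro t
      fin_cases t
      · show X.map (mkOfLe i j _).op x = X.map (mkOfSucc 0).op (X.map (mkOfLeComp i j k _ _).op x)
        rw [← map_comp_apply]
        exact ConcreteCategory.congr_hom (congrArg (fun f => X.map (Quiver.Hom.op f))
          (hom_ext₁ (f := mkOfLe i j (leOfHom f))
            (g := mkOfSucc 0 ≫ mkOfLeComp i j k (leOfHom f) (leOfHom g)) (by rfl) (by rfl))) x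
      · show X.map (mkOfLe j k _).op x = X.map (mkOfSucc 1).op (X.map (mkOfLeComp i j k _ _).op x)
        rw [← map_comp_apply]
        exact ConcreteCategory.congr_hom (congrArg (fun f => X.map (Quiver.Hom.op f))
          (hom_ext₁ (f := mkOfLe j k (leOfHom g))
            (g := mkOfSucc 1 ≫ mkOfLeComp i j k (leOfHom f) (leOfHom g)) (by rfl) (by rfl))) x
    show _ = spineToDiagonal _
    rw [hsp]
    dsimp only [spineToDiagonal]
    rw [spineToSimplex_spine]
    show _ = X.map (diag 2).op (X.map (mkOfLeComp i j k _ _).op x)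
    rw [← map_comp_apply]
    exact ConcreteCategory.congr_hom (congrArg (fun f => X.map (Quiver.Hom.op f))
      (hom_ext₁ (f := mkOfLe i k (leOfHom (f ≫ g)))
        (g := diag 2 ≫ mkOfLeComp i j k (leOfHom f) (leOfHom g)) (by rfl) (by rfl))) x

lemma map_congr_hom {a b : SimplexCategory} {f g : a ⟶ b} (h : f = g)
    (x : X.obj (Opposite.op b)) : X.map f.op x = X.map g.op x := by rw [h]

lemma eOf_toCA_map {n : ℕ} (x : X _⦋n⦌) {i j : Fin (n + 1)} (f : i ⟶ j) :
    eOf ((toCA n x).map f) = X.map (mkOfLe i j (leOfHom f)).op x := rfl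

lemma toCA_natural {m m' : ℕ} (α : (⦋m⦌ : SimplexCategory) ⟶ ⦋m'⦌) (x : X _⦋m'⦌) :
    toCA m (X.map α.op x) = (nerve (HoCat X)).map α.op (toCA m' x) := by
  have hobj : ∀ i, (toCA m (X.map α.op x)).obj i =
      ((nerve (HoCat X)).map α.op (toCA m' x)).obj i := by
    intro i
    show X.map (SimplexCategory.const ⦋0⦌ ⦋m⦌ i).op (X.map α.op x) = _
    rw [← map_comp_apply]
    exact map_congr_hom (hom_ext₀ rfl) x
  refine ComposableArrows.ext hobj ?_
  · intro i hi
    apply eOf_inj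
    rw [eqToHom_comp_val]
    show X.map (mkOfLe _ _ _).op (X.map α.op x) = X.map (mkOfLe _ _ _).op x
    rw [← map_comp_apply]
    exact map_congr_hom (hom_ext₁ (by rfl) (by rfl)) x

lemma toCA_injective {n : ℕ} : Function.Injective (toCA (X := X) n) := by
  intro x y h
  apply spineInjective (n := n)
  show X.spine n x = X.spine n y
  ext i
  · exact Functor.congr_obj h i
  · show X.map (mkOfSucc i).op x = X.map (mkOfSucc i).op y
    have h2 := congrArg eOf (Functor.congr_hom h (homOfLE (Fin.castSucc_le_succ i)))
    rw [eqToHom_comp_val] at h2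
    rw [eOf_toCA_map, eOf_toCA_map] at h2
    rw [map_congr_hom (f := mkOfSucc i)
      (g := mkOfLe i.castSucc i.succ (Fin.castSucc_le_succ i)) (hom_ext₁ (by rfl) (by rfl)) x,
      map_congr_hom (f := mkOfSucc i)
      (g := mkOfLe i.castSucc i.succ (Fin.castSucc_le_succ i)) (hom_ext₁ (by rfl) (by rfl)) y]
    exact h2

lemma toCA_surjective {n : ℕ} : Function.Surjective (toCA (X := X) n) := by
  intro F
  let p : Path X n :=
    { vertex := fun i => F.obj i
      arrow := fun i => eOf (F.map (homOfLE (Fin.castSucc_le_succ i)))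
      arrow_src := fun i => eOf_src _
      arrow_tgt := fun i => eOf_tgt _ }
  refine ⟨spineToSimplex p, ?_⟩
  have hobj : ∀ i, (toCA n (spineToSimplex p)).obj i = F.obj i := by
    intro i
    show X.map (SimplexCategory.const ⦋0⦌ ⦋n⦌ i).op (spineToSimplex p) = _
    rw [spineToSimplex_vertex]
  refine ComposableArrows.ext hobj ?_
  · intro i hi
    apply eOf_inj
    rw [eqToHom_comp_val]
    show X.map (mkOfLe _ _ _).op (spineToSimplex p) = eOf (F.map (homOfLE _))
    rw [map_congr_hom
      (g := mkOfSucc (⟨i, hi⟩ : Fin n)) (hom_ext₁ (by rfl) (by rfl)) (spineToSimplex p),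
      spineToSimplex_arrow]

/-- The comparison map from `X` to the nerve of its homotopy category. -/
noncomputable def toNerve : X ⟶ nerve (HoCat X) where
  app Δ := TypeCat.ofHom (fun x => toCA Δ.unop.len x)
  naturality Δ Δ' φ := by
    ext x
    exact toCA_natural (m := Δ'.unop.len) (m' := Δ.unop.len) φ.unop x
end Stmt4

namespace Stmt4C
open SSet
variable {X : SSet.{u}}

lemma spine_naturality {Y : SSet.{u}} (σ : X ⟶ Y) {n : ℕ} (x : X _⦋n⦌) :
    Y.spine n (σ.app _ x) = (X.spine n x).map σ := by
  ext i
  · dsimp [spine, Path.map]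
    exact ConcreteCategory.congr_hom (σ.naturality _) x |>.symm
  · dsimp [spine, Path.map]
    exact ConcreteCategory.congr_hom (σ.naturality _) x |>.symm

lemma path_map_comp {Y Z : SSet.{u}} {n : ℕ} (p : Path X n) (σ : X ⟶ Y) (τ : Y ⟶ Z) :
    (p.map σ).map τ = p.map (σ ≫ τ) := rfl

lemma path_map_id {n : ℕ} (p : Path X n) : p.map (𝟙 X) = p := rfl

/-- Transport of the strict Segal property along an isomorphism. -/
noncomputable def strictSegalOfIso {Y : SSet.{u}} (sy : StrictSegal Y) (e : X ≅ Y) :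
    StrictSegal X where
  spineToSimplex {n} f := e.inv.app _ (sy.spineToSimplex (f.map e.hom))
  spine_spineToSimplex n := by
    funext f
    show X.spine n (e.inv.app _ (sy.spineToSimplex (f.map e.hom))) = f
    rw [spine_naturality, StrictSegal.spine_spineToSimplex_apply, path_map_comp, e.hom_inv_id,
      path_map_id]
  spineToSimplex_spine n := by
    funext x
    show e.inv.app _ (sy.spineToSimplex ((X.spine n x).map e.hom)) = x
    rw [← spine_naturality, StrictSegal.spineToSimplex_spine_apply]
    exact ConcreteCategory.congr_hom (e.hom_inv_id_app _) x

end Stmt4C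

theorem stmt_4 (X : SSet.{u}) :
    Nonempty (SSet.StrictSegal X) ↔
      ∃ (C : Type u) (_ : SmallCategory C), Nonempty (X ≅ nerve C) := by
  constructor
  · rintro ⟨sx⟩
    letI : Stmt4.SSeg X := ⟨sx⟩
    refine ⟨Stmt4.HoCat X, inferInstance, ⟨?_⟩⟩
    haveI : ∀ Δ, IsIso ((Stmt4.toNerve (X := X)).app Δ) := by
      intro Δ
      rw [CategoryTheory.isIso_iff_bijective]
      show Function.Bijective (Stmt4.toCA (X := X) Δ.unop.len)
      exact ⟨Stmt4.toCA_injective (n := Δ.unop.len), Stmt4.toCA_surjective (n := Δ.unop.len)⟩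
    haveI : IsIso (Stmt4.toNerve (X := X)) := NatIso.isIso_of_isIso_app _
    exact asIso (Stmt4.toNerve (X := X))
  · rintro ⟨C, instC, ⟨e⟩⟩
    exact ⟨Stmt4C.strictSegalOfIso (Nerve.strictSegal C) e⟩
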